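/- The conditional expected spot price is bounded by the midpoint of the price range: for every p ∈ [π̲, π̄] with F(p) > 0, (∫_{π̲}^{p} x f(x) dx)/F(p) ≤ (π̲ + π̄)/2. In particular the mean spot price ∫_{π̲}^{π̄} x f(x) dx is at most (π̲ + π̄)/2. -/
import Mathlib

lemma key_mid (a p : ℝ) (f : ℝ → ℝ) (hp : a ≤ p)
    (hc : ContinuousOn f (Set.Icc a p))
    (hanti : ∀ x ∈ Set.Icc a p, ∀ y ∈ Set.Icc a p, x ≤ y → f y ≤ f x) :
    (∫ x in a..p, x * f x) ≤ ((a + p) / 2) * ∫ x in a..p, f x := by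
  set m : ℝ := (a + p) / 2 with hm
  have ham : a ≤ m := by rw [hm]; linarith
  have hmp : m ≤ p := by rw [hm]; linarith
  have hmem : m ∈ Set.Icc a p := ⟨ham, hmp⟩
  have hc1 : ContinuousOn f (Set.Icc a m) :=
    hc.mono (Set.Icc_subset_Icc le_rfl hmp)
  have hc2 : ContinuousOn f (Set.Icc m p) :=
    hc.mono (Set.Icc_subset_Icc ham le_rfl)
  have hg : ContinuousOn (fun x => (x - m) * f x) (Set.Icc a p) :=
    (continuousOn_id.sub continuousOn_const).mul hc
  have hgInt : IntervalIntegrable (fun x => (x - m) * f x) MeasureTheory.volume a p :=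
    hg.intervalIntegrable_of_Icc hp
  have hgInt1 : IntervalIntegrable (fun x => (x - m) * f x) MeasureTheory.volume a m :=
    (hg.mono (Set.Icc_subset_Icc le_rfl hmp)).intervalIntegrable_of_Icc ham
  have hgInt2 : IntervalIntegrable (fun x => (x - m) * f x) MeasureTheory.volume m p :=
    (hg.mono (Set.Icc_subset_Icc ham le_rfl)).intervalIntegrable_of_Icc hmp
  have hcInt1 : IntervalIntegrable (fun x => (x - m) * f m) MeasureTheory.volume a m :=
    (Continuous.intervalIntegrable (by continuity) a m)
  have hcInt2 : IntervalIntegrable (fun x => (x - m) * f m) MeasureTheory.volume m p :=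
    (Continuous.intervalIntegrable (by continuity) m p)
  have hfInt : IntervalIntegrable f MeasureTheory.volume a p :=
    hc.intervalIntegrable_of_Icc hp
  -- bound on [a, m]
  have h1 : (∫ x in a..m, (x - m) * f x) ≤ ∫ x in a..m, (x - m) * f m := by
    apply intervalIntegral.integral_mono_on ham hgInt1 hcInt1
    intro x hx
    have hfx : f m ≤ f x :=
      hanti x ⟨hx.1, hx.2.trans hmp⟩ m hmem hx.2
    have hx0 : x - m ≤ 0 := by linarith [hx.2]
    exact mul_le_mul_of_nonpos_left hfx hx0
  have h2 : (∫ x in m..p, (x - m) * f x) ≤ ∫ x in m..p, (x - m) * f m := by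
    apply intervalIntegral.integral_mono_on hmp hgInt2 hcInt2
    intro x hx
    have hfx : f x ≤ f m :=
      hanti m hmem x ⟨ham.trans hx.1, hx.2⟩ hx.1
    have hx0 : 0 ≤ x - m := by linarith [hx.1]
    exact mul_le_mul_of_nonneg_left hfx hx0
  have hzero : (∫ x in a..p, (x - m) * f m) = 0 := by
    have : (∫ x in a..p, (x - m)) = 0 := by
      have h1 : IntervalIntegrable (fun x : ℝ => x) MeasureTheory.volume a p :=
        intervalIntegral.intervalIntegrable_id
      have h2 : IntervalIntegrable (fun _ : ℝ => m) MeasureTheory.volume a p :=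
        intervalIntegrable_const
      rw [intervalIntegral.integral_sub h1 h2, integral_id,
        intervalIntegral.integral_const, smul_eq_mul, hm]
      ring
    rw [intervalIntegral.integral_mul_const, this, zero_mul]
  have hsplit : (∫ x in a..m, (x - m) * f m) + (∫ x in m..p, (x - m) * f m)
      = ∫ x in a..p, (x - m) * f m :=
    intervalIntegral.integral_add_adjacent_intervals hcInt1 hcInt2
  have hsplitg : (∫ x in a..m, (x - m) * f x) + (∫ x in m..p, (x - m) * f x)
      = ∫ x in a..p, (x - m) * f x :=
    intervalIntegral.integral_add_adjacent_intervals hgInt1 hgInt2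
  have hneg : (∫ x in a..p, (x - m) * f x) ≤ 0 := by
    rw [← hsplitg]
    calc _ ≤ (∫ x in a..m, (x - m) * f m) + (∫ x in m..p, (x - m) * f m) :=
          add_le_add h1 h2
      _ = ∫ x in a..p, (x - m) * f m := hsplit
      _ = 0 := hzero
  have hdecomp : (∫ x in a..p, x * f x)
      = (∫ x in a..p, (x - m) * f x) + m * ∫ x in a..p, f x := by
    have : (∫ x in a..p, m * f x) = m * ∫ x in a..p, f x :=
      intervalIntegral.integral_const_mul m f
    rw [← this, ← intervalIntegral.integral_add hgInt (hfInt.const_mul m)]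
    congr 1; funext x; ring
  linarith [hneg, hdecomp.le, hdecomp.ge]

/-- The conditional expected spot price is bounded by the midpoint of the price range,
and in particular the mean spot price is at most `(π̲ + π̄)/2`. -/
theorem stmt_2
    (πlo πhi : ℝ) (f F : ℝ → ℝ)
    (hπlo : 0 ≤ πlo) (hlt : πlo < πhi)
    (hcont : ContinuousOn f (Set.Icc πlo πhi))
    (hnn : ∀ x ∈ Set.Icc πlo πhi, 0 ≤ f x)
    (hanti : ∀ x ∈ Set.Icc πlo πhi, ∀ y ∈ Set.Icc πlo πhi, x ≤ y → f y ≤ f x)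
    (hone : (∫ x in πlo..πhi, f x) = 1)
    (hF : ∀ p, F p = ∫ x in πlo..p, f x) :
    (∀ p ∈ Set.Icc πlo πhi, 0 < F p →
      (∫ x in πlo..p, x * f x) / F p ≤ (πlo + πhi) / 2) ∧
    (∫ x in πlo..πhi, x * f x) ≤ (πlo + πhi) / 2 := by
  constructor
  · intro p hp hFp
    have hsub : Set.Icc πlo p ⊆ Set.Icc πlo πhi := Set.Icc_subset_Icc le_rfl hp.2
    have hkey := key_mid πlo p f hp.1 (hcont.mono hsub)
      (fun x hx y hy hxy => hanti x (hsub hx) y (hsub hy) hxy)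
    rw [div_le_iff₀ hFp, hF p]
    calc (∫ x in πlo..p, x * f x) ≤ ((πlo + p) / 2) * ∫ x in πlo..p, f x := hkey
      _ ≤ ((πlo + πhi) / 2) * ∫ x in πlo..p, f x := by
          apply mul_le_mul_of_nonneg_right (by linarith [hp.2])
          have := hF p ▸ hFp
          linarith [hFp, (hF p).symm ▸ hFp]
  · have hkey := key_mid πlo πhi f hlt.le hcont hanti
    rw [hone, mul_one] at hkey
    exact hkey
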